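/- Weighted conformal coverage under covariate shift: suppose (X_i,Y_i) are i.i.d. from P = P_X × P_{Y|X} for i = 1,...,n, and (X_{n+1},Y_{n+1}) ~ P̃_X × P_{Y|X} independently, with P̃_X absolutely continuous with respect to P_X and w = dP̃_X/dP_X. Then the weighted conformal set Ĉ_n(x) = {y : V_{n+1}^{(x,y)} ≤ Quantile(1−α; Σ_{i=1}^n p_i^w(x) δ_{V_i^{(x,y)}} + p_{n+1}^w(x) δ_∞)}, with p_i^w(x) = w(X_i)/(Σ_j w(X_j) + w(x)) and p_{n+1}^w(x) = w(x)/(Σ_j w(X_j) + w(x)), satisfies P(Y_{n+1} ∈ Ĉ_n(X_{n+1})) ≥ 1 − α. -/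

import Mathlib

open MeasureTheory ProbabilityTheory Finset ENNReal

open Classical in
/-- Deterministic weighted counting lemma. -/
lemma aux_weight_bound {m : ℕ} (α : ℝ) (hα0 : 0 < α)
    (W V : Fin m → ℝ) (hW : ∀ i, 0 ≤ W i) :
    ∑ i, (if (0 < ∑ j, W j ∧
        (1 - α) * ∑ j, W j ≤ ∑ k ∈ univ.erase i, (if V k < V i then W k else 0))
      then W i else 0) ≤ α * ∑ j, W j := by
  set T := ∑ j, W j with hT
  set cond : Fin m → Prop := fun i => (0 < T ∧
      (1 - α) * T ≤ ∑ k ∈ univ.erase i, (if V k < V i then W k else 0)) with hcond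
  have hT0 : 0 ≤ T := Finset.sum_nonneg fun j _ => hW j
  by_cases hB : ∃ i, cond i
  · obtain ⟨i₁, hi₁⟩ := hB
    have hBne : (univ.filter cond).Nonempty := ⟨i₁, Finset.mem_filter.mpr ⟨Finset.mem_univ _, hi₁⟩⟩
    obtain ⟨i₀, hi₀B, hi₀min⟩ := Finset.exists_min_image (univ.filter cond) V hBne
    have hi₀cond : cond i₀ := (Finset.mem_filter.mp hi₀B).2
    have key : (1 - α) * T ≤ ∑ k, (if V k < V i₀ then W k else 0) := by
      refine hi₀cond.2.trans (le_of_eq ?_)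
      exact Finset.sum_erase _ (by simp)
    have h1 : ∑ i, (if cond i then W i else 0) = ∑ i ∈ univ.filter cond, W i := by
      rw [Finset.sum_filter]
    have h2 : ∑ i ∈ univ.filter cond, W i
        ≤ ∑ i ∈ univ.filter (fun i => ¬ V i < V i₀), W i := by
      refine Finset.sum_le_sum_of_subset_of_nonneg ?_ (fun i _ _ => hW i)
      intro i hi
      simp only [Finset.mem_filter, Finset.mem_univ, true_and] at hi ⊢
      exact not_lt.mpr (hi₀min i (Finset.mem_filter.mpr ⟨Finset.mem_univ _, hi⟩))
    have h3 : ∑ i ∈ univ.filter (fun i => ¬ V i < V i₀), W i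
        = T - ∑ i ∈ univ.filter (fun i => V i < V i₀), W i := by
      have := Finset.sum_filter_add_sum_filter_not (univ : Finset (Fin m))
        (fun i => V i < V i₀) W
      linarith
    have h4 : ∑ k, (if V k < V i₀ then W k else 0)
        = ∑ i ∈ univ.filter (fun i => V i < V i₀), W i := (Finset.sum_filter _ _).symm
    calc ∑ i, (if cond i then W i else 0) ≤ T - ∑ i ∈ univ.filter (fun i => V i < V i₀), W i := by
          rw [h1]; exact h2.trans h3.le
      _ ≤ α * T := by rw [← h4]; linarith
  · push_neg at hB
    have : ∀ i ∈ univ, (if cond i then W i else 0) = 0 := fun i _ => if_neg (hB i)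
    rw [Finset.sum_congr rfl this]
    simp
    positivity


lemma aux_pi_density {γ : Type*} [MeasurableSpace γ] {n : ℕ} (P : Measure γ)
    [IsProbabilityMeasure P] (g : γ → ℝ≥0∞) (hg : Measurable g)
    [IsProbabilityMeasure (P.withDensity g)] (i : Fin (n + 1))
    (F : (Fin (n + 1) → γ) → ℝ≥0∞) (hF : Measurable F) :
    ∫⁻ z, F z ∂(Measure.pi (fun j => if j = i then P.withDensity g else P))
      = ∫⁻ z, F z * g (z i) ∂(Measure.pi (fun _ : Fin (n + 1) => P)) := by
  classical
  set ν : Fin (n + 1) → Measure γ := fun j => if j = i then P.withDensity g else P with hν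
  haveI hinst : ∀ j, IsProbabilityMeasure (ν j) := fun j => by
    rw [hν]; dsimp only; split <;> infer_instance
  set e := MeasurableEquiv.piFinSuccAbove (fun _ : Fin (n + 1) => γ) i with he
  have h1 : MeasurePreserving e (Measure.pi ν)
      ((P.withDensity g).prod (Measure.pi fun _ : Fin n => P)) := by
    have h := measurePreserving_piFinSuccAbove ν i
    have h2 : ν i = P.withDensity g := by simp [hν]
    have h3 : (fun j : Fin n => ν (i.succAbove j)) = fun _ => P := by
      funext j; simp [hν, Fin.succAbove_ne i j]
    rw [h2, h3] at h
    exact h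
  have h2 : MeasurePreserving e (Measure.pi fun _ : Fin (n + 1) => P)
      (P.prod (Measure.pi fun _ : Fin n => P)) :=
    measurePreserving_piFinSuccAbove (fun _ => P) i
  have hFm : Measurable fun p : γ × (Fin n → γ) => F (e.symm p) := hF.comp e.symm.measurable
  calc ∫⁻ z, F z ∂(Measure.pi ν)
      = ∫⁻ p, F (e.symm p) ∂((P.withDensity g).prod (Measure.pi fun _ : Fin n => P)) := by
        rw [h1.lintegral_map_equiv (fun p => F (e.symm p)) e]
        simp
    _ = ∫⁻ x, g x * ∫⁻ y, F (e.symm (x, y)) ∂(Measure.pi fun _ : Fin n => P) ∂P := by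
        rw [lintegral_prod _ hFm.aemeasurable,
          lintegral_withDensity_eq_lintegral_mul P hg hFm.lintegral_prod_right']
        rfl
    _ = ∫⁻ p, F (e.symm p) * g p.1 ∂(P.prod (Measure.pi fun _ : Fin n => P)) := by
        rw [lintegral_prod (fun p => F (e.symm p) * g p.1)
          ((hFm.mul (hg.comp measurable_fst)).aemeasurable)]
        congr 1; funext x
        have hmx : Measurable fun y : Fin n → γ => F (e.symm (x, y)) := by
          exact hFm.comp measurable_prodMk_left
        rw [← lintegral_const_mul (g x) hmx]
        congr 1; funext y; dsimp; ring
    _ = ∫⁻ z, F z * g (z i) ∂(Measure.pi fun _ : Fin (n + 1) => P) := by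
        rw [h2.lintegral_map_equiv (fun p => F (e.symm p) * g p.1) e]
        congr 1; funext z
        simp only [MeasurableEquiv.symm_apply_apply]
        rfl


/-- Weighted conformal coverage under covariate shift (Tibshirani et al.): the training
pairs `Z i = (X i, Y i)`, `i ≤ n`, are i.i.d. from `P`, the test pair `Z (n+1)` is
independently drawn from the distribution with density `w(x)` with respect to `P`
(same conditional of `Y` given `X`, shifted `X`-marginal with likelihood ratio `w`).
For any symmetric nonconformity score `𝒮`, the weighted conformal set with weights
`p_i ∝ w(X i)` and point mass `∝ w(X (n+1))` at `+∞` has coverage at least `1 − α`. -/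
theorem weighted_conformal_covariate_shift
    {Ω : Type*} [MeasureSpace Ω] [IsProbabilityMeasure (volume : Measure Ω)]
    {𝓧 𝓨 : Type*} [MeasurableSpace 𝓧] [MeasurableSpace 𝓨]
    (n : ℕ) (α : ℝ) (hα : α ∈ Set.Ioo (0 : ℝ) 1)
    (Z : Fin (n + 1) → Ω → 𝓧 × 𝓨)
    (P : Measure (𝓧 × 𝓨)) [IsProbabilityMeasure P]
    (w : 𝓧 → ℝ)
    (𝒮 : (Fin (n + 1) → 𝓧 × 𝓨) → Fin (n + 1) → ℝ)
    (hZmeas : ∀ i, Measurable (Z i))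
    (hwmeas : Measurable w) (hwnonneg : ∀ x, 0 ≤ w x)
    (h𝒮meas : ∀ i, Measurable fun d => 𝒮 d i)
    (h𝒮symm : ∀ (σ : Equiv.Perm (Fin (n + 1))) (d : Fin (n + 1) → 𝓧 × 𝓨),
      𝒮 (d ∘ σ) = (𝒮 d) ∘ σ)
    (hindep : iIndepFun Z volume)
    (htrain : ∀ i : Fin n, Measure.map (Z i.castSucc) volume = P)
    (htest : Measure.map (Z (Fin.last n)) volume
      = P.withDensity fun z => ENNReal.ofReal (w z.1)) :
    ENNReal.ofReal (1 - α) ≤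
      volume {ω : Ω |
        ((𝒮 (fun j => Z j ω) (Fin.last n) : ℝ) : EReal) ≤
          sInf {t : EReal | 1 - α ≤
            (∑ i : Fin n,
                if ((𝒮 (fun j => Z j ω) i.castSucc : ℝ) : EReal) ≤ t
                then w (Z i.castSucc ω).1 else 0)
                / ((∑ j : Fin n, w (Z j.castSucc ω).1) + w (Z (Fin.last n) ω).1)
              + (if (⊤ : EReal) ≤ t
                 then w (Z (Fin.last n) ω).1
                   / ((∑ j : Fin n, w (Z j.castSucc ω).1) + w (Z (Fin.last n) ω).1)
                 else 0)}} := by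
  classical
  obtain ⟨hα0, hα1⟩ := hα
  -- basic objects
  set f₁ : 𝓧 × 𝓨 → ℝ≥0∞ := fun z => ENNReal.ofReal (w z.1) with hf₁def
  have hf₁ : Measurable f₁ := ENNReal.measurable_ofReal.comp (hwmeas.comp measurable_fst)
  haveI hwP : IsProbabilityMeasure (P.withDensity f₁) := by
    rw [← htest]
    exact Measure.isProbabilityMeasure_map (hZmeas _).aemeasurable
  set J : Ω → (Fin (n + 1) → 𝓧 × 𝓨) := fun ω j => Z j ω with hJdef
  have hJ : Measurable J := measurable_pi_lambda _ hZmeas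
  set ν : Fin (n + 1) → Measure (𝓧 × 𝓨) :=
    fun j => if j = Fin.last n then P.withDensity f₁ else P with hνdef
  haveI hνprob : ∀ j, IsProbabilityMeasure (ν j) := fun j => by
    rw [hνdef]; dsimp only; split <;> infer_instance
  -- the joint law is the product measure
  have hmap : Measure.map J volume = Measure.pi ν := by
    refine (Measure.pi_eq fun s hs => ?_).symm
    rw [Measure.map_apply hJ (MeasurableSet.univ_pi hs)]
    have hpre : J ⁻¹' Set.pi Set.univ s = ⋂ j ∈ Finset.univ, Z j ⁻¹' s j := by
      ext ω; simp [hJdef, Set.mem_pi]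
    rw [hpre, (iIndepFun_iff_measure_inter_preimage_eq_mul.mp hindep) Finset.univ
      (fun j _ => hs j)]
    refine Finset.prod_congr rfl fun j _ => ?_
    rw [← Measure.map_apply (hZmeas j) (hs j), hνdef]
    dsimp only
    by_cases hj : j = Fin.last n
    · rw [if_pos hj, hj, htest]
    · rw [if_neg hj]
      obtain ⟨i, rfl⟩ := Fin.exists_castSucc_eq.mpr hj
      rw [htrain i]
  -- the "bad" event in the product space
  set T : (Fin (n + 1) → 𝓧 × 𝓨) → ℝ := fun z => ∑ j, w (z j).1 with hTdef
  have hTmeas : Measurable T :=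
    Finset.measurable_sum _ fun j _ => hwmeas.comp (measurable_fst.comp (measurable_pi_apply j))
  set A : Set (Fin (n + 1) → 𝓧 × 𝓨) := {z | 0 < T z ∧ (1 - α) * T z ≤
      ∑ i : Fin n, (if 𝒮 z i.castSucc < 𝒮 z (Fin.last n) then w (z i.castSucc).1 else 0)}
    with hAdef
  have hA : MeasurableSet A := by
    have hNmeas : Measurable fun z : Fin (n + 1) → 𝓧 × 𝓨 =>
        ∑ i : Fin n, (if 𝒮 z i.castSucc < 𝒮 z (Fin.last n) then w (z i.castSucc).1 else 0) :=
      Finset.measurable_sum _ fun i _ => Measurable.ite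
        (measurableSet_lt (h𝒮meas _) (h𝒮meas _))
        (hwmeas.comp (measurable_fst.comp (measurable_pi_apply _))) measurable_const
    exact (measurableSet_lt measurable_const hTmeas).inter
      (measurableSet_le (hTmeas.const_mul _) hNmeas)
  -- Step 1 : outside the preimage of A, coverage holds
  have step1 : (J ⁻¹' A)ᶜ ⊆ {ω : Ω |
        ((𝒮 (fun j => Z j ω) (Fin.last n) : ℝ) : EReal) ≤
          sInf {t : EReal | 1 - α ≤
            (∑ i : Fin n,
                if ((𝒮 (fun j => Z j ω) i.castSucc : ℝ) : EReal) ≤ t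
                then w (Z i.castSucc ω).1 else 0)
                / ((∑ j : Fin n, w (Z j.castSucc ω).1) + w (Z (Fin.last n) ω).1)
              + (if (⊤ : EReal) ≤ t
                 then w (Z (Fin.last n) ω).1
                   / ((∑ j : Fin n, w (Z j.castSucc ω).1) + w (Z (Fin.last n) ω).1)
                 else 0)}} := by
    intro ω hω
    simp only [Set.mem_compl_iff, Set.mem_preimage] at hω
    simp only [Set.mem_setOf_eq]
    by_contra hc
    rw [not_le] at hc
    obtain ⟨t, htS, htlt⟩ := sInf_lt_iff.mp hc
    simp only [Set.mem_setOf_eq] at htS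
    set D := (∑ j : Fin n, w (Z j.castSucc ω).1) + w (Z (Fin.last n) ω).1 with hDdef
    have hnottop : ¬ ((⊤ : EReal) ≤ t) := not_le.mpr (htlt.trans_le le_top)
    rw [if_neg hnottop, add_zero] at htS
    have hDnonneg : 0 ≤ D := by
      rw [hDdef]
      have : (0:ℝ) ≤ ∑ j : Fin n, w (Z j.castSucc ω).1 :=
        Finset.sum_nonneg fun j _ => hwnonneg _
      linarith [hwnonneg (Z (Fin.last n) ω).1]
    by_cases hD0 : D = 0
    · rw [hD0, _root_.div_zero] at htS; linarith
    have hDpos : 0 < D := lt_of_le_of_ne hDnonneg (Ne.symm hD0)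
    rw [le_div_iff₀ hDpos] at htS
    have hmono : (∑ i : Fin n,
          if ((𝒮 (fun j => Z j ω) i.castSucc : ℝ) : EReal) ≤ t
          then w (Z i.castSucc ω).1 else 0)
        ≤ ∑ i : Fin n, (if 𝒮 (J ω) i.castSucc < 𝒮 (J ω) (Fin.last n)
            then w ((J ω) i.castSucc).1 else 0) := by
      refine Finset.sum_le_sum fun i _ => ?_
      by_cases hi : ((𝒮 (fun j => Z j ω) i.castSucc : ℝ) : EReal) ≤ t
      · rw [if_pos hi, if_pos (by exact_mod_cast hi.trans_lt htlt)]
      · rw [if_neg hi]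
        split
        · exact hwnonneg _
        · exact le_rfl
    have hTJ : T (J ω) = D := by
      rw [hDdef, hTdef]
      exact Fin.sum_univ_castSucc fun j => w ((J ω) j).1
    exact hω ⟨by rw [hTJ]; exact hDpos, by rw [hTJ]; exact le_trans htS hmono⟩
  -- permutations
  set σ : Fin (n + 1) → Equiv.Perm (Fin (n + 1)) :=
    fun i => Equiv.swap i (Fin.last n) with hσdef
  have hσlast : ∀ i, σ i (Fin.last n) = i := fun i => Equiv.swap_apply_right _ _
  have hσeq : ∀ i j, σ i j = Fin.last n ↔ j = i := by
    intro i j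
    constructor
    · intro h
      have := (σ i).injective (h.trans (Equiv.swap_apply_left i (Fin.last n)).symm)
      exact this
    · rintro rfl; exact Equiv.swap_apply_left _ _
  set Sw : Fin (n + 1) → Set (Fin (n + 1) → 𝓧 × 𝓨) :=
    fun i => (fun z (j : Fin (n + 1)) => z (σ i j)) ⁻¹' A with hSwdef
  have hSwMeas : ∀ i, MeasurableSet (Sw i) := fun i =>
    (measurable_pi_lambda _ fun j => measurable_pi_apply _) hA
  set Q : Measure (Fin (n + 1) → 𝓧 × 𝓨) := Measure.pi (fun _ => P) with hQdef
  set G : Fin (n + 1) → (Fin (n + 1) → 𝓧 × 𝓨) → ℝ≥0∞ :=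
    fun i z => Set.indicator (Sw i) 1 z * f₁ (z i) with hGdef
  have hGmeas : ∀ i, Measurable (G i) := fun i =>
    (measurable_one.indicator (hSwMeas i)).mul (hf₁.comp (measurable_pi_apply i))
  -- Step 2 : each permuted mass gives the same value
  have step2 : ∀ i, (Measure.pi ν) A = ∫⁻ z, G i z ∂Q := by
    intro i
    set E := MeasurableEquiv.piCongrLeft (fun _ : Fin (n + 1) => 𝓧 × 𝓨) (σ i) with hEdef
    have hpc : MeasurePreserving E (Measure.pi fun j => ν (σ i j)) (Measure.pi ν) :=
      measurePreserving_piCongrLeft ν (σ i)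
    have hνσ : (fun j => ν (σ i j)) = fun j => if j = i then P.withDensity f₁ else P := by
      funext j
      rw [hνdef]
      dsimp only
      by_cases hj : j = i
      · rw [if_pos ((hσeq i j).mpr hj), if_pos hj]
      · rw [if_neg (fun h => hj ((hσeq i j).mp h)), if_neg hj]
    have hE : ∀ z, E z = fun j => z (σ i j) := by
      intro z
      funext j
      conv_lhs => rw [← Equiv.swap_apply_self i (Fin.last n) j]
      rw [hEdef, MeasurableEquiv.coe_piCongrLeft]
      exact Equiv.piCongrLeft_apply_apply _ _ _ _
    have hpre : E ⁻¹' A = Sw i := by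
      ext z
      simp only [Set.mem_preimage, hSwdef, hE z]
    have h1 : (Measure.pi ν) A = (Measure.pi fun j => ν (σ i j)) (Sw i) := by
      rw [← hpre]
      exact (hpc.measure_preimage hA.nullMeasurableSet).symm
    rw [h1, hνσ]
    have h2 : (Measure.pi fun j => if j = i then P.withDensity f₁ else P) (Sw i)
        = ∫⁻ z, Set.indicator (Sw i) 1 z
            ∂(Measure.pi fun j => if j = i then P.withDensity f₁ else P) := by
      rw [lintegral_indicator_one (hSwMeas i)]
    rw [h2, aux_pi_density P f₁ hf₁ i _ (measurable_one.indicator (hSwMeas i))]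
  -- Step 3 : membership in the permuted event
  have step3 : ∀ i z, z ∈ Sw i ↔ (0 < T z ∧ (1 - α) * T z ≤
      ∑ k ∈ univ.erase i, (if 𝒮 z k < 𝒮 z i then w (z k).1 else 0)) := by
    intro i z
    set d : Fin (n + 1) → 𝓧 × 𝓨 := fun j => z (σ i j) with hddef
    have hdz : d = z ∘ (σ i) := rfl
    have hS : ∀ k, 𝒮 d k = 𝒮 z (σ i k) := by
      intro k
      rw [hdz, h𝒮symm (σ i) z]
      rfl
    have hTd : T d = T z := by
      rw [hTdef]
      exact Equiv.sum_comp (σ i) fun j => w (z j).1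
    have hlast : 𝒮 d (Fin.last n) = 𝒮 z i := by rw [hS, hσlast]
    have hsum : (∑ jj : Fin n,
          if 𝒮 d jj.castSucc < 𝒮 d (Fin.last n) then w (d jj.castSucc).1 else 0)
        = ∑ k ∈ univ.erase i, (if 𝒮 z k < 𝒮 z i then w (z k).1 else 0) := by
      set f : Fin (n + 1) → ℝ := fun k => if 𝒮 z k < 𝒮 z i then w (z k).1 else 0 with hfdef
      have h1 : ∀ jj : Fin n, (if 𝒮 d jj.castSucc < 𝒮 d (Fin.last n)
          then w (d jj.castSucc).1 else 0) = f (σ i jj.castSucc) := by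
        intro jj; rw [hS, hlast]
      rw [Finset.sum_congr rfl fun jj _ => h1 jj]
      have h2 : (∑ jj : Fin n, f (σ i jj.castSucc)) + f (σ i (Fin.last n))
          = ∑ k : Fin (n + 1), f (σ i k) :=
        (Fin.sum_univ_castSucc fun k => f (σ i k)).symm
      rw [Equiv.sum_comp (σ i) f] at h2
      have h3 : (∑ k ∈ univ.erase i, f k) + f i = ∑ k, f k :=
        Finset.sum_erase_add _ _ (Finset.mem_univ i)
      rw [hσlast] at h2
      linarith
    constructor
    · rintro ⟨hpos, hle⟩
      exact ⟨hTd ▸ hpos, by rw [← hTd, ← hsum]; exact hle⟩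
    · rintro ⟨hpos, hle⟩
      exact ⟨hTd.symm ▸ hpos, by rw [hTd, hsum]; exact hle⟩
  -- Step 4 : the pointwise bound
  have step4 : ∀ z, (∑ i, G i z) ≤ ENNReal.ofReal (α * T z) := by
    intro z
    have hterm : ∀ i, G i z = ENNReal.ofReal
        (if (0 < T z ∧ (1 - α) * T z ≤
            ∑ k ∈ univ.erase i, (if 𝒮 z k < 𝒮 z i then w (z k).1 else 0))
          then w (z i).1 else 0) := by
      intro i
      rw [hGdef]
      dsimp only
      by_cases hz : z ∈ Sw i
      · rw [Set.indicator_of_mem hz, if_pos ((step3 i z).mp hz), Pi.one_apply, one_mul, hf₁def]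
      · rw [Set.indicator_of_notMem hz, if_neg (fun h => hz ((step3 i z).mpr h)),
          zero_mul, ENNReal.ofReal_zero]
    rw [Finset.sum_congr rfl fun i _ => hterm i, ← ENNReal.ofReal_sum_of_nonneg
      (fun i _ => by split; exacts [hwnonneg _, le_rfl])]
    refine ENNReal.ofReal_le_ofReal ?_
    have := aux_weight_bound α hα0 (fun i => w (z i).1) (fun i => 𝒮 z i)
      (fun i => hwnonneg _)
    simpa [hTdef] using this
  -- marginal integral of the density is 1
  have hone : ∀ i : Fin (n + 1), ∫⁻ z, f₁ (z i) ∂Q = 1 := by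
    intro i
    haveI : ∀ j : Fin (n + 1),
        IsProbabilityMeasure ((fun j => if j = i then P.withDensity f₁ else P) j) := by
      intro j; dsimp only; split <;> infer_instance
    have h := aux_pi_density P f₁ hf₁ i (fun _ => 1) measurable_const
    simp only [one_mul] at h
    rw [hQdef, ← h, lintegral_one]
    exact measure_univ
  -- Step 5 : the bad event has probability at most α
  have step5 : (Measure.pi ν) A ≤ ENNReal.ofReal α := by
    have hcount : (((n : ℕ) + 1 : ℕ) : ℝ≥0∞) * (Measure.pi ν) A
        = ∑ _i : Fin (n + 1), (Measure.pi ν) A := by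
      rw [Finset.sum_const, Finset.card_univ, Fintype.card_fin, nsmul_eq_mul]
    have hchain : (((n : ℕ) + 1 : ℕ) : ℝ≥0∞) * (Measure.pi ν) A
        ≤ ENNReal.ofReal α * (((n : ℕ) + 1 : ℕ) : ℝ≥0∞) := by
      rw [hcount]
      calc ∑ _i : Fin (n + 1), (Measure.pi ν) A
          = ∑ i : Fin (n + 1), ∫⁻ z, G i z ∂Q :=
            Finset.sum_congr rfl fun i _ => step2 i
        _ = ∫⁻ z, ∑ i, G i z ∂Q := (lintegral_finset_sum _ fun i _ => hGmeas i).symm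
        _ ≤ ∫⁻ z, ENNReal.ofReal (α * T z) ∂Q := lintegral_mono step4
        _ ≤ ∫⁻ z, ENNReal.ofReal α * ∑ i, f₁ (z i) ∂Q := by
            refine lintegral_mono fun z => ?_
            rw [ENNReal.ofReal_mul hα0.le]
            refine mul_le_mul_right (le_of_eq ?_) _
            exact ENNReal.ofReal_sum_of_nonneg (fun i _ => hwnonneg _)
        _ = ENNReal.ofReal α * ∑ i, ∫⁻ z, f₁ (z i) ∂Q := by
            have hmeach : ∀ i : Fin (n + 1),
                Measurable fun z : Fin (n + 1) → 𝓧 × 𝓨 => f₁ (z i) := fun i => by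
              exact hf₁.comp (measurable_pi_apply i)
            have hsm : Measurable fun z : Fin (n + 1) → 𝓧 × 𝓨 => ∑ i, f₁ (z i) := by
              exact Finset.measurable_sum _ fun i _ => hmeach i
            rw [lintegral_const_mul _ hsm,
              lintegral_finset_sum _ fun i _ => hmeach i]
        _ = ENNReal.ofReal α * (((n : ℕ) + 1 : ℕ) : ℝ≥0∞) := by
            rw [Finset.sum_congr rfl fun i _ => hone i, Finset.sum_const,
              Finset.card_univ, Fintype.card_fin, nsmul_eq_mul, mul_one]
    rw [mul_comm (ENNReal.ofReal α) _] at hchain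
    exact (ENNReal.mul_le_mul_iff_right (by exact_mod_cast Nat.succ_ne_zero n)
      (ENNReal.natCast_ne_top _)).mp hchain
  -- conclusion
  have hμA : volume (J ⁻¹' A) ≤ ENNReal.ofReal α := by
    rw [← Measure.map_apply hJ hA, hmap]
    exact step5
  calc ENNReal.ofReal (1 - α) = 1 - ENNReal.ofReal α := by
        rw [ENNReal.ofReal_sub _ hα0.le, ENNReal.ofReal_one]
    _ ≤ 1 - volume (J ⁻¹' A) := tsub_le_tsub_left hμA 1
    _ = volume ((J ⁻¹' A)ᶜ) := (prob_compl_eq_one_sub (hJ hA)).symm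
    _ ≤ volume _ := measure_mono step1
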